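/- Let q = p^n with p an odd prime, and let L(x) = x^(p^r) + γx with γ ∈ F_q*. Let d = gcd(n, r). Then L is a permutation of F_q if and only if (-1)^(n/d) · γ^((p^n - 1)/(p^d - 1)) ≠ 1. -/

import Mathlib

/-- Geometric sum identity in ℕ. -/
lemma geom_nat (t : ℕ) (ht : 1 ≤ t) (k : ℕ) :
    (t - 1) * ∑ i ∈ Finset.range k, t ^ i = t ^ k - 1 := by
  induction k with
  | zero => simp
  | succ k ih =>
    rw [Finset.sum_range_succ, Nat.mul_add, ih]
    have h1 : 0 < t ^ k := Nat.pow_pos ht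
    have h3 : (t - 1) * t ^ k = t ^ (k + 1) - t ^ k := by
      rw [Nat.sub_mul, one_mul, ← pow_succ']
    have h4 : t ^ k ≤ t ^ (k + 1) := Nat.pow_le_pow_right ht (Nat.le_succ k)
    omega

/-- `gcd (p^m - 1) (p^n - 1) = p^(gcd m n) - 1`. -/
lemma gcd_pow_sub_one (p : ℕ) (hp : 1 ≤ p) :
    ∀ m n : ℕ, Nat.gcd (p ^ m - 1) (p ^ n - 1) = p ^ Nat.gcd m n - 1 := by
  intro m
  induction m using Nat.strong_induction_on with
  | _ m ih =>
    intro n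
    rcases Nat.eq_zero_or_pos m with rfl | hm0
    · simp
    have h1 : 1 ≤ p ^ m := Nat.one_le_pow _ _ hp
    have hmod : p ^ n ≡ p ^ (n % m) [MOD p ^ m - 1] := by
      conv_lhs => rw [← Nat.div_add_mod n m]
      rw [pow_add, pow_mul]
      have hone : (1 : ℕ) ≡ p ^ m [MOD p ^ m - 1] :=
        (Nat.modEq_iff_dvd' h1).mpr dvd_rfl
      calc (p ^ m) ^ (n / m) * p ^ (n % m)
          ≡ 1 ^ (n / m) * p ^ (n % m) [MOD p ^ m - 1] :=
            ((hone.symm.pow _).mul_right _)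
        _ = p ^ (n % m) := by rw [one_pow, one_mul]
    have hsub : p ^ n - 1 ≡ p ^ (n % m) - 1 [MOD p ^ m - 1] := by
      have h2 : 1 ≤ p ^ n := Nat.one_le_pow _ _ hp
      have h3 : 1 ≤ p ^ (n % m) := Nat.one_le_pow _ _ hp
      apply Nat.ModEq.add_right_cancel' 1
      rwa [Nat.sub_add_cancel h2, Nat.sub_add_cancel h3]
    calc Nat.gcd (p ^ m - 1) (p ^ n - 1)
        = Nat.gcd ((p ^ n - 1) % (p ^ m - 1)) (p ^ m - 1) := Nat.gcd_rec _ _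
      _ = Nat.gcd ((p ^ (n % m) - 1) % (p ^ m - 1)) (p ^ m - 1) := by rw [hsub]
      _ = Nat.gcd (p ^ m - 1) (p ^ (n % m) - 1) := (Nat.gcd_rec _ _).symm
      _ = Nat.gcd (p ^ (n % m) - 1) (p ^ m - 1) := Nat.gcd_comm _ _
      _ = p ^ Nat.gcd (n % m) m - 1 := ih (n % m) (Nat.mod_lt n hm0) m
      _ = p ^ Nat.gcd m n - 1 := by rw [← Nat.gcd_rec]

/-- In a finite cyclic group, `u` is an `m`-th power iff `u^(card/gcd(card,m)) = 1`. -/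
lemma exists_pow_eq_iff_cyclic {G : Type*} [Group G] [Fintype G] [IsCyclic G] (m : ℕ) (u : G) :
    (∃ v : G, v ^ m = u) ↔ u ^ (Fintype.card G / Nat.gcd (Fintype.card G) m) = 1 := by
  classical
  obtain ⟨g, hg⟩ := IsCyclic.exists_generator (α := G)
  set N := Fintype.card G with hN
  have hN0 : 0 < N := Fintype.card_pos
  set d := Nat.gcd N m with hd
  have hd0 : 0 < d := Nat.gcd_pos_of_pos_left _ hN0
  constructor
  · rintro ⟨v, rfl⟩
    obtain ⟨c, hc⟩ := Nat.gcd_dvd_right N m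
    rw [← pow_mul]
    have hmul : m * (N / d) = N * c := by
      rw [hc, Nat.mul_comm d c, Nat.mul_assoc, Nat.mul_div_cancel' (Nat.gcd_dvd_left N m),
        Nat.mul_comm]
    rw [hmul, pow_mul, pow_card_eq_one, one_pow]
  · intro hu
    have hpow := hg u
    rw [← mem_powers_iff_mem_zpowers] at hpow
    obtain ⟨s, rfl⟩ := hpow
    have horder : orderOf g = N :=
      (orderOf_eq_card_of_forall_mem_zpowers hg).trans Nat.card_eq_fintype_card
    have h1 : g ^ (s * (N / d)) = 1 := by rw [pow_mul]; exact hu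
    have h2 : N ∣ s * (N / d) := by
      have h2' : orderOf g ∣ s * (N / d) := orderOf_dvd_of_pow_eq_one h1
      rwa [horder] at h2'
    have hNd : d * (N / d) = N := Nat.mul_div_cancel' (Nat.gcd_dvd_left N m)
    have hdpos : 0 < N / d := Nat.div_pos (Nat.le_of_dvd hN0 (Nat.gcd_dvd_left N m)) hd0
    have h3 : d ∣ s := by
      have h4 : d * (N / d) ∣ s * (N / d) := by rw [hNd]; exact h2
      exact (Nat.mul_dvd_mul_iff_right hdpos).mp h4
    obtain ⟨k, hk⟩ := h3
    have hbez : (d : ℤ) = N * Nat.gcdA N m + m * Nat.gcdB N m := Nat.gcd_eq_gcd_ab N m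
    refine ⟨g ^ ((k : ℤ) * Nat.gcdB N m), ?_⟩
    have hgN : g ^ (N : ℤ) = 1 := by rw [zpow_natCast]; exact pow_card_eq_one
    have hsz : (s : ℤ) = (d : ℤ) * k := by exact_mod_cast hk
    calc (g ^ ((k : ℤ) * Nat.gcdB N m)) ^ m
        = g ^ (((k : ℤ) * Nat.gcdB N m) * m) := by
          rw [← zpow_natCast (g ^ ((k : ℤ) * Nat.gcdB N m)) m, ← zpow_mul]
      _ = g ^ ((s : ℤ) + (-(k * Nat.gcdA N m)) * N) := by
          congr 1
          linear_combination (-(k : ℤ)) * hbez - hsz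
      _ = g ^ (s : ℤ) * (g ^ (N : ℤ)) ^ (-(k * Nat.gcdA N m) : ℤ) := by
          rw [zpow_add, ← zpow_mul, mul_comm (-(k * Nat.gcdA N m) : ℤ) (N : ℤ)]
      _ = g ^ s := by rw [hgN, one_zpow, mul_one, zpow_natCast]

/-- Criterion for the linearized binomial `x ↦ x^(p^r) + γ x` to permute `F_{p^n}`. -/
theorem stmt9 {K : Type*} [Field K] [Fintype K] (p n r : ℕ) (hp : p.Prime) (hpodd : Odd p)
    (hcard : Fintype.card K = p ^ n) (γ : K) (hγ : γ ≠ 0) :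
    Function.Bijective (fun x : K => x ^ p ^ r + γ * x) ↔
      (-1 : K) ^ (n / Nat.gcd n r) * γ ^ ((p ^ n - 1) / (p ^ Nat.gcd n r - 1)) ≠ 1 := by
  classical
  haveI : Fact p.Prime := ⟨hp⟩
  have hp1 : 1 < p := hp.one_lt
  have hn0 : 0 < n := by
    rcases Nat.eq_zero_or_pos n with h | h
    · exfalso
      have := Fintype.one_lt_card (α := K)
      rw [hcard, h, pow_zero] at this
      omega
    · exact h
  -- characteristic
  have hchar : CharP K p := by
    obtain ⟨p', hp'⟩ := CharP.exists K
    haveI := hp'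
    obtain ⟨n', hp'prime, hcard'⟩ := FiniteField.card K p'
    have hpp' : p = p' := by
      have hdvd : p ∣ p' ^ (n' : ℕ) := by
        rw [← hcard', hcard]
        exact dvd_pow_self p hn0.ne'
      have := (Nat.Prime.dvd_of_dvd_pow hp hdvd)
      exact ((Nat.prime_dvd_prime_iff_eq hp hp'prime).mp this)
    rwa [hpp']
  haveI := hchar
  set d := Nat.gcd n r with hdef
  have hdn : d ∣ n := Nat.gcd_dvd_left n r
  have hd0 : 0 < d := Nat.gcd_pos_of_pos_left _ hn0
  have hpr1 : 1 ≤ p ^ r := Nat.one_le_pow _ _ hp.pos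
  have hγ' : (-γ : K) ≠ 0 := neg_ne_zero.mpr hγ
  -- the additive map
  set f : K → K := fun x => x ^ p ^ r + γ * x with hf
  have hmapzero : f 0 = 0 := by
    simp [hf, zero_pow (show 0 < p ^ r from Nat.pow_pos hp.pos).ne']
  have hmapadd : ∀ x y : K, f (x + y) = f x + f y := by
    intro x y
    simp only [hf, add_pow_char_pow]
    ring
  let φ : K →+ K := ⟨⟨f, hmapzero⟩, hmapadd⟩
  -- reduce to nonzero kernel elements
  have hker : ∀ x : K, x ≠ 0 → (f x = 0 ↔ x ^ (p ^ r - 1) = -γ) := by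
    intro x hx
    have hx' : x ^ p ^ r = x ^ (p ^ r - 1) * x := by
      conv_lhs => rw [show p ^ r = (p ^ r - 1) + 1 by omega]
      rw [pow_succ]
    constructor
    · intro h
      have : x ^ (p ^ r - 1) * x = -γ * x := by
        rw [← hx']
        have : x ^ p ^ r = -(γ * x) := by linear_combination h
        rw [this]; ring
      exact mul_right_cancel₀ hx this
    · intro h
      simp only [hf, hx', h]
      ring
  have hstep1 : Function.Bijective f ↔ ¬ ∃ x : K, x ≠ 0 ∧ x ^ (p ^ r - 1) = -γ := by
    constructor
    · rintro hbij ⟨x, hx0, hx⟩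
      have hfx : f x = 0 := (hker x hx0).mpr hx
      exact hx0 (hbij.injective (by rw [hfx, hmapzero]))
    · intro hno
      apply Finite.injective_iff_bijective.mp
      have : Function.Injective φ := by
        rw [injective_iff_map_eq_zero]
        intro a ha
        by_contra ha0
        exact hno ⟨a, ha0, (hker a ha0).mp ha⟩
      exact this
  -- move to units
  have hstep2 : (∃ x : K, x ≠ 0 ∧ x ^ (p ^ r - 1) = -γ) ↔
      ∃ v : Kˣ, v ^ (p ^ r - 1) = Units.mk0 (-γ) hγ' := by
    constructor
    · rintro ⟨x, hx0, hx⟩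
      refine ⟨Units.mk0 x hx0, ?_⟩
      ext
      simpa using hx
    · rintro ⟨v, hv⟩
      refine ⟨(v : K), v.ne_zero, ?_⟩
      have := congrArg (Units.val) hv
      simpa using this
  have hcardu : Fintype.card Kˣ = p ^ n - 1 := by
    rw [Fintype.card_units, hcard]
  have hgcd : Nat.gcd (Fintype.card Kˣ) (p ^ r - 1) = p ^ d - 1 := by
    rw [hcardu, gcd_pow_sub_one p hp.one_lt.le n r]
  have hstep3 : (∃ v : Kˣ, v ^ (p ^ r - 1) = Units.mk0 (-γ) hγ') ↔
      (-γ : K) ^ ((p ^ n - 1) / (p ^ d - 1)) = 1 := by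
    rw [exists_pow_eq_iff_cyclic, hgcd, hcardu]
    rw [← Units.val_eq_one, Units.val_pow_eq_pow_val, Units.val_mk0]
  -- sign computation
  have hsign : (-γ : K) ^ ((p ^ n - 1) / (p ^ d - 1)) =
      (-1 : K) ^ (n / d) * γ ^ ((p ^ n - 1) / (p ^ d - 1)) := by
    rw [neg_eq_neg_one_mul, mul_pow]
    congr 1
    have htodd : Odd (p ^ d) := hpodd.pow
    have ht1 : 1 < p ^ d := Nat.one_lt_pow hd0.ne' hp1
    have hpn : p ^ n = (p ^ d) ^ (n / d) := by
      conv_lhs => rw [← Nat.mul_div_cancel' hdn, pow_mul]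
    have hm : (p ^ n - 1) / (p ^ d - 1) = ∑ i ∈ Finset.range (n / d), (p ^ d) ^ i := by
      rw [hpn, ← geom_nat (p ^ d) ht1.le (n / d),
        Nat.mul_div_cancel_left _ (by omega : 0 < p ^ d - 1)]
    rw [hm, ← Finset.prod_pow_eq_pow_sum]
    have hprod : ∀ i ∈ Finset.range (n / d), (-1 : K) ^ (p ^ d) ^ i = -1 := by
      intro i _
      exact Odd.neg_one_pow (htodd.pow)
    rw [Finset.prod_congr rfl hprod, Finset.prod_const, Finset.card_range]
  -- assemble
  rw [show Function.Bijective (fun x : K => x ^ p ^ r + γ * x) = Function.Bijective f from rfl,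
    hstep1, hstep2, hstep3, hsign]
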